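/- Let P be a shape-invariant predicate on subsets of V, and let S, S' ⊆ V both satisfy P with |S| = |S'| = k. If there exists a TJ(P)-sequence from S to S', then there exists a TJ(P)-sequence from S to S' of minimum length whose shape sequence σ̄_0, …, σ̄_m consists of pairwise distinct shapes such that σ̄_j and σ̄_{j+1} are adjacent in the size-k shape graph S_k for every 0 ≤ j < m (i.e., the shape sequence forms a simple path in S_k). -/
import Mathlib


/-! Shapes framework: `V` is a finite type partitioned into types `Vp 0, …, Vp (t-1)`;
`q ≥ 1` is a fixed integer. A shape is a function `Fin t → Option ℕ`, where `none`
represents the symbol ⊤. -/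

variable {α : Type*} [DecidableEq α] [Fintype α]

/-- The partition of the vertex set into `t` pairwise disjoint nonempty types. -/
def IsTypePartition {t : ℕ} (Vp : Fin t → Finset α) : Prop :=
  (∀ i, (Vp i).Nonempty) ∧ (∀ i j, i ≠ j → Disjoint (Vp i) (Vp j)) ∧
    (∀ v : α, ∃ i, v ∈ Vp i)

/-- The signature of a set `X`: `sig Vp X i = |V_i ∩ X|`. -/
def sig {t : ℕ} (Vp : Fin t → Finset α) (X : Finset α) (i : Fin t) : ℕ :=
  ((Vp i) ∩ X).card

/-- The (unique) shape of a set `X`: it is `⊤` (i.e. `none`) at `i` when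
`q ≤ |V_i ∩ X| ≤ |V_i| − q`, and `|V_i ∩ X|` otherwise.  A set `X` has shape `σ`
iff `shapeOf q Vp X = σ`. -/
def shapeOf {t : ℕ} (q : ℕ) (Vp : Fin t → Finset α) (X : Finset α) (i : Fin t) : Option ℕ :=
  if q ≤ sig Vp X i ∧ sig Vp X i ≤ (Vp i).card - q then none else some (sig Vp X i)

/-- A predicate on subsets of `V` is shape-invariant if any two subsets with the same
shape either both satisfy it or both fail it. -/
def ShapeInvariant {t : ℕ} (q : ℕ) (Vp : Fin t → Finset α) (P : Finset α → Prop) : Prop :=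
  ∀ X Y : Finset α, shapeOf q Vp X = shapeOf q Vp Y → (P X ↔ P Y)

/-- `TJSeq P seq ℓ S S'` : the sequence `seq 0, …, seq ℓ` is a TJ(P)-sequence from
`S` to `S'` (of length `ℓ`): consecutive sets differ by a single token jump and
all sets satisfy `P`. -/
def TJSeq (P : Finset α → Prop) (seq : ℕ → Finset α) (ℓ : ℕ) (S S' : Finset α) : Prop :=
  seq 0 = S ∧ seq ℓ = S' ∧ (∀ i ≤ ℓ, P (seq i)) ∧
    ∀ i < ℓ, (seq i \ seq (i + 1)).card = 1 ∧ (seq (i + 1) \ seq i).card = 1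

/-- A shape `σ` is `k`-feasible (w.r.t. `P`) if some set of cardinality `k` with
shape `σ` satisfies `P`. -/
def KFeasible {t : ℕ} (q : ℕ) (Vp : Fin t → Finset α) (P : Finset α → Prop)
    (k : ℕ) (σ : Fin t → Option ℕ) : Prop :=
  ∃ X : Finset α, X.card = k ∧ shapeOf q Vp X = σ ∧ P X

/-- Conditions A1–A3 at index `i` for the pair of shapes `(σ1, σ2)`. -/
def Acond {t : ℕ} (q : ℕ) (Vp : Fin t → Finset α)
    (σ1 σ2 : Fin t → Option ℕ) (i : Fin t) : Prop :=
  (∃ a b, σ1 i = some a ∧ σ2 i = some b ∧ b + 1 = a) ∨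
  (σ1 i = none ∧ σ2 i = some (q - 1)) ∨
  (σ1 i = some ((Vp i).card - q + 1) ∧ σ2 i = none)

/-- Conditions B1–B3 at index `j` for the pair of shapes `(σ1, σ2)`. -/
def Bcond {t : ℕ} (q : ℕ) (Vp : Fin t → Finset α)
    (σ1 σ2 : Fin t → Option ℕ) (j : Fin t) : Prop :=
  (∃ a b, σ1 j = some a ∧ σ2 j = some b ∧ a + 1 = b) ∨
  (σ2 j = none ∧ σ1 j = some (q - 1)) ∨
  (σ2 j = some ((Vp j).card - q + 1) ∧ σ1 j = none)

/-- Condition (2) of adjacency: a witness of size `k` and shape `σ1` with the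
prescribed signatures at the (possibly undefined) designated indices `oi`, `oj`. -/
def Cond2 {t : ℕ} (q : ℕ) (Vp : Fin t → Finset α) (k : ℕ)
    (σ1 : Fin t → Option ℕ) (oi oj : Option (Fin t)) : Prop :=
  ∃ S1 : Finset α, S1.card = k ∧ shapeOf q Vp S1 = σ1 ∧
    (∀ i, oi = some i → σ1 i = none → sig Vp S1 i = q) ∧
    (∀ j, oj = some j → σ1 j = none → sig Vp S1 j = (Vp j).card - q)

/-- Condition (3) of adjacency: a witness of size `k` and shape `σ2` with the
prescribed signatures at the (possibly undefined) designated indices `oi`, `oj`. -/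
def Cond3 {t : ℕ} (q : ℕ) (Vp : Fin t → Finset α) (k : ℕ)
    (σ2 : Fin t → Option ℕ) (oi oj : Option (Fin t)) : Prop :=
  ∃ S2 : Finset α, S2.card = k ∧ shapeOf q Vp S2 = σ2 ∧
    (∀ i, oi = some i → σ2 i = none → sig Vp S2 i = (Vp i).card - q) ∧
    (∀ j, oj = some j → σ2 j = none → sig Vp S2 j = q)

/-- The adjacency conditions (1)–(3) for two shapes: either they disagree at exactly
two indices `i` (satisfying A1–A3) and `j` (satisfying B1–B3), or they disagree at
exactly one index, which satisfies A1–A3 (called `i`) or B1–B3 (called `j`);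
in all cases the witnesses required by conditions (2) and (3) exist. -/
def ShapeAdj {t : ℕ} (q : ℕ) (Vp : Fin t → Finset α) (k : ℕ)
    (σ1 σ2 : Fin t → Option ℕ) : Prop :=
  (∃ i j : Fin t, i ≠ j ∧ (∀ h, σ1 h ≠ σ2 h ↔ (h = i ∨ h = j)) ∧
    Acond q Vp σ1 σ2 i ∧ Bcond q Vp σ1 σ2 j ∧
    Cond2 q Vp k σ1 (some i) (some j) ∧ Cond3 q Vp k σ2 (some i) (some j)) ∨
  (∃ i : Fin t, (∀ h, σ1 h ≠ σ2 h ↔ h = i) ∧ Acond q Vp σ1 σ2 i ∧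
    Cond2 q Vp k σ1 (some i) none ∧ Cond3 q Vp k σ2 (some i) none) ∨
  (∃ j : Fin t, (∀ h, σ1 h ≠ σ2 h ↔ h = j) ∧ Bcond q Vp σ1 σ2 j ∧
    Cond2 q Vp k σ1 none (some j) ∧ Cond3 q Vp k σ2 none (some j))

/-- Adjacency in the size-`k` shape graph `S_k`: the vertices are the `k`-feasible
shapes, and two distinct vertices are joined iff the adjacency conditions hold. -/
def GraphAdj {t : ℕ} (q : ℕ) (Vp : Fin t → Finset α) (P : Finset α → Prop)
    (k : ℕ) (σ1 σ2 : Fin t → Option ℕ) : Prop :=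
  σ1 ≠ σ2 ∧ KFeasible q Vp P k σ1 ∧ KFeasible q Vp P k σ2 ∧ ShapeAdj q Vp k σ1 σ2

/-- `ShapeSeqOf q Vp seq ℓ σs m` : `σs 0, …, σs m` is the shape sequence of the
TJ-sequence `seq 0, …, seq ℓ`, i.e. the sequence can be split into `m + 1`
consecutive nonempty blocks (described by the monotone block-index function `b`)
such that every set in the `j`-th block has shape `σs j`, and consecutive shapes
in `σs` differ. -/
def ShapeSeqOf {t : ℕ} (q : ℕ) (Vp : Fin t → Finset α) (seq : ℕ → Finset α)
    (ℓ : ℕ) (σs : ℕ → Fin t → Option ℕ) (m : ℕ) : Prop :=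
  ∃ b : ℕ → ℕ, b 0 = 0 ∧ b ℓ = m ∧
    (∀ i < ℓ, b (i + 1) = b i ∨ b (i + 1) = b i + 1) ∧
    (∀ i ≤ ℓ, shapeOf q Vp (seq i) = σs (b i)) ∧
    (∀ j < m, σs j ≠ σs (j + 1))

/-! ### Auxiliary lemmas -/

section Aux

set_option linter.unusedSectionVars false
set_option linter.unusedVariables false

variable {t : ℕ} {q : ℕ} {Vp : Fin t → Finset α}

lemma type_unique (hVp : IsTypePartition Vp) {u : α} {i j : Fin t}
    (hi : u ∈ Vp i) (hj : u ∈ Vp j) : i = j := by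
  by_contra h
  exact Finset.disjoint_left.1 (hVp.2.1 i j h) hi hj

lemma sig_sum (hVp : IsTypePartition Vp) (X : Finset α) :
    ∑ i, sig Vp X i = X.card := by
  classical
  have hX : X = Finset.univ.biUnion (fun i => Vp i ∩ X) := by
    ext x
    simp only [Finset.mem_biUnion, Finset.mem_univ, true_and, Finset.mem_inter]
    constructor
    · rintro hx
      obtain ⟨i, hi⟩ := hVp.2.2 x
      exact ⟨i, hi, hx⟩
    · rintro ⟨i, _, hx⟩; exact hx
  simp only [sig]
  conv_rhs => rw [hX]
  rw [Finset.card_biUnion]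
  intro i _ j _ hij
  exact (hVp.2.1 i j hij).mono Finset.inter_subset_left Finset.inter_subset_left

lemma mem_swap {X : Finset α} {u v x : α} (hu : u ∈ X) (hv : v ∉ X) :
    x ∈ insert v (X.erase u) ↔ x = v ∨ (x ∈ X ∧ x ≠ u) := by
  simp [Finset.mem_insert, Finset.mem_erase, and_comm]

lemma swap_ne {X : Finset α} {u v : α} (hu : u ∈ X) (hv : v ∉ X) : u ≠ v := by
  rintro rfl; exact hv hu

lemma card_swap {X : Finset α} {u v : α} (hu : u ∈ X) (hv : v ∉ X) :
    (insert v (X.erase u)).card = X.card := by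
  rw [Finset.card_insert_of_notMem, Finset.card_erase_of_mem hu]
  · have : 1 ≤ X.card := Finset.card_pos.2 ⟨u, hu⟩
    omega
  · simp only [Finset.mem_erase]
    rintro ⟨-, h⟩; exact hv h

lemma sdiff_swap₁ {X : Finset α} {u v : α} (hu : u ∈ X) (hv : v ∉ X) :
    X \ insert v (X.erase u) = {u} := by
  ext x
  simp only [Finset.mem_sdiff, mem_swap hu hv, Finset.mem_singleton]
  constructor
  · rintro ⟨hx, h⟩
    by_contra hxu
    exact h (Or.inr ⟨hx, hxu⟩)
  · rintro rfl
    refine ⟨hu, ?_⟩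
    rintro (rfl | ⟨-, h⟩)
    · exact hv hu
    · exact h rfl

lemma sdiff_swap₂ {X : Finset α} {u v : α} (hu : u ∈ X) (hv : v ∉ X) :
    insert v (X.erase u) \ X = {v} := by
  ext x
  simp only [Finset.mem_sdiff, mem_swap hu hv, Finset.mem_singleton]
  constructor
  · rintro ⟨rfl | ⟨hx, -⟩, h⟩
    · rfl
    · exact absurd hx h
  · rintro rfl
    exact ⟨Or.inl rfl, hv⟩

lemma sdiff_swap_target {X Y : Finset α} {u v : α} (hu : u ∈ X) (hv : v ∉ X)
    (hvY : v ∈ Y) : insert v (X.erase u) \ Y = (X \ Y).erase u := by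
  ext x
  simp only [Finset.mem_sdiff, mem_swap hu hv, Finset.mem_erase]
  constructor
  · rintro ⟨rfl | ⟨hx, hxu⟩, h⟩
    · exact absurd hvY h
    · exact ⟨hxu, hx, h⟩
  · rintro ⟨hxu, hx, h⟩
    exact ⟨Or.inr ⟨hx, hxu⟩, h⟩

lemma sig_swap_other {X : Finset α} {u v : α} (hu : u ∈ X) (hv : v ∉ X)
    {h : Fin t} (hu' : u ∉ Vp h) (hv' : v ∉ Vp h) :
    sig Vp (insert v (X.erase u)) h = sig Vp X h := by
  unfold sig
  congr 1
  ext x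
  simp only [Finset.mem_inter, mem_swap hu hv]
  constructor
  · rintro ⟨hxV, rfl | ⟨hx, -⟩⟩
    · exact absurd hxV hv'
    · exact ⟨hxV, hx⟩
  · rintro ⟨hxV, hx⟩
    refine ⟨hxV, Or.inr ⟨hx, ?_⟩⟩
    rintro rfl; exact hu' hxV

lemma sig_swap_out {X : Finset α} {u v : α} (hu : u ∈ X) (hv : v ∉ X)
    {h : Fin t} (hu' : u ∈ Vp h) (hv' : v ∉ Vp h) :
    sig Vp X h = sig Vp (insert v (X.erase u)) h + 1 := by
  unfold sig
  have key : Vp h ∩ X = insert u (Vp h ∩ insert v (X.erase u)) := by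
    ext x
    simp only [Finset.mem_inter, Finset.mem_insert, mem_swap hu hv]
    constructor
    · rintro ⟨hxV, hx⟩
      by_cases hxu : x = u
      · exact Or.inl hxu
      · exact Or.inr ⟨hxV, Or.inr ⟨hx, hxu⟩⟩
    · rintro (rfl | ⟨hxV, rfl | ⟨hx, -⟩⟩)
      · exact ⟨hu', hu⟩
      · exact absurd hxV hv'
      · exact ⟨hxV, hx⟩
  have hnm : u ∉ Vp h ∩ insert v (X.erase u) := by
    rw [Finset.mem_inter, mem_swap hu hv]
    rintro ⟨-, rfl | ⟨-, h⟩⟩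
    exacts [hv hu, h rfl]
  rw [key, Finset.card_insert_of_notMem hnm]

lemma sig_swap_in {X : Finset α} {u v : α} (hu : u ∈ X) (hv : v ∉ X)
    {h : Fin t} (hu' : u ∉ Vp h) (hv' : v ∈ Vp h) :
    sig Vp (insert v (X.erase u)) h = sig Vp X h + 1 := by
  unfold sig
  have key : Vp h ∩ insert v (X.erase u) = insert v (Vp h ∩ X) := by
    ext x
    simp only [Finset.mem_inter, Finset.mem_insert, mem_swap hu hv]
    constructor
    · rintro ⟨hxV, rfl | ⟨hx, -⟩⟩
      · exact Or.inl rfl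
      · exact Or.inr ⟨hxV, hx⟩
    · rintro (rfl | ⟨hxV, hx⟩)
      · exact ⟨hv', Or.inl rfl⟩
      · refine ⟨hxV, Or.inr ⟨hx, ?_⟩⟩
        rintro rfl; exact hu' hxV
  rw [key, Finset.card_insert_of_notMem]
  simp only [Finset.mem_inter, not_and]
  intro _; exact hv

lemma sig_swap_same {X : Finset α} {u v : α} (hu : u ∈ X) (hv : v ∉ X)
    {h : Fin t} (hu' : u ∈ Vp h) (hv' : v ∈ Vp h) :
    sig Vp (insert v (X.erase u)) h = sig Vp X h := by
  unfold sig
  have key : Vp h ∩ insert v (X.erase u) = insert v ((Vp h ∩ X).erase u) := by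
    ext x
    simp only [Finset.mem_inter, Finset.mem_insert, Finset.mem_erase, mem_swap hu hv]
    constructor
    · rintro ⟨hxV, rfl | ⟨hx, hxu⟩⟩
      · exact Or.inl rfl
      · exact Or.inr ⟨hxu, hxV, hx⟩
    · rintro (rfl | ⟨hxu, hxV, hx⟩)
      · exact ⟨hv', Or.inl rfl⟩
      · exact ⟨hxV, Or.inr ⟨hx, hxu⟩⟩
  rw [key, Finset.card_insert_of_notMem, Finset.card_erase_of_mem (by
    exact Finset.mem_inter.2 ⟨hu', hu⟩)]
  · have : 1 ≤ (Vp h ∩ X).card := Finset.card_pos.2 ⟨u, Finset.mem_inter.2 ⟨hu', hu⟩⟩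
    omega
  · simp only [Finset.mem_erase, Finset.mem_inter]
    rintro ⟨-, -, h⟩; exact hv h

lemma shape_congr {X X' : Finset α} (h : ∀ i, sig Vp X' i = sig Vp X i) :
    shapeOf q Vp X' = shapeOf q Vp X := by
  funext i
  unfold shapeOf
  rw [h i]

lemma top_of_ne {X Y : Finset α} {i : Fin t}
    (hsh : shapeOf q Vp X i = shapeOf q Vp Y i) (hne : sig Vp X i ≠ sig Vp Y i) :
    q ≤ sig Vp X i ∧ sig Vp X i ≤ (Vp i).card - q ∧
      q ≤ sig Vp Y i ∧ sig Vp Y i ≤ (Vp i).card - q := by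
  unfold shapeOf at hsh
  by_cases h1 : q ≤ sig Vp X i ∧ sig Vp X i ≤ (Vp i).card - q <;>
    by_cases h2 : q ≤ sig Vp Y i ∧ sig Vp Y i ≤ (Vp i).card - q
  · exact ⟨h1.1, h1.2, h2.1, h2.2⟩
  · rw [if_pos h1, if_neg h2] at hsh; cases hsh
  · rw [if_neg h1, if_pos h2] at hsh; cases hsh
  · rw [if_neg h1, if_neg h2] at hsh; exact absurd (Option.some.inj hsh) hne

lemma step_exists (hVp : IsTypePartition Vp) {X Y : Finset α}
    (hcard : X.card = Y.card) (hshape : shapeOf q Vp X = shapeOf q Vp Y)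
    (hne : (X \ Y).Nonempty) :
    ∃ X' : Finset α, shapeOf q Vp X' = shapeOf q Vp X ∧ X'.card = X.card ∧
      (X' \ Y).card + 1 = (X \ Y).card ∧ (X \ X').card = 1 ∧ (X' \ X).card = 1 := by
  classical
  by_cases hs : ∀ i, sig Vp X i = sig Vp Y i
  · -- all signatures equal: swap within a type
    obtain ⟨u, hu⟩ := hne
    rw [Finset.mem_sdiff] at hu
    obtain ⟨huX, huY⟩ := hu
    obtain ⟨i, hui⟩ := hVp.2.2 u
    have hsub : ¬ (Vp i ∩ Y ⊆ Vp i ∩ X) := by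
      intro hsub
      have heq : Vp i ∩ Y = Vp i ∩ X :=
        Finset.eq_of_subset_of_card_le hsub (le_of_eq (hs i))
      have : u ∈ Vp i ∩ Y := heq ▸ Finset.mem_inter.2 ⟨hui, huX⟩
      exact huY (Finset.mem_inter.1 this).2
    obtain ⟨v, hvY, hvX⟩ := Finset.not_subset.1 hsub
    rw [Finset.mem_inter] at hvY
    have hvX' : v ∉ X := fun hc => hvX (Finset.mem_inter.2 ⟨hvY.1, hc⟩)
    refine ⟨insert v (X.erase u), ?_, card_swap huX hvX', ?_, ?_, ?_⟩
    · refine shape_congr (fun h => ?_)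
      by_cases hhi : h = i
      · subst hhi; exact sig_swap_same huX hvX' hui hvY.1
      · refine sig_swap_other huX hvX' (fun hc => hhi (type_unique hVp hc hui))
          (fun hc => hhi (type_unique hVp hc hvY.1))
    · rw [sdiff_swap_target huX hvX' hvY.2,
        Finset.card_erase_of_mem (Finset.mem_sdiff.2 ⟨huX, huY⟩)]
      have : 1 ≤ (X \ Y).card := Finset.card_pos.2 ⟨u, Finset.mem_sdiff.2 ⟨huX, huY⟩⟩
      omega
    · rw [sdiff_swap₁ huX hvX']; simp
    · rw [sdiff_swap₂ huX hvX']; simp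
  · -- some signature differs: move between two top types
    push_neg at hs
    have hsum : ∑ h, sig Vp X h = ∑ h, sig Vp Y h := by
      rw [sig_sum hVp, sig_sum hVp, hcard]
    have hexi : ∃ i, sig Vp Y i < sig Vp X i := by
      by_contra h'
      push_neg at h'
      obtain ⟨i0, hi0⟩ := hs
      have := Finset.sum_lt_sum (fun h _ => h' h)
        ⟨i0, Finset.mem_univ i0, lt_of_le_of_ne (h' i0) hi0⟩
      omega
    have hexj : ∃ j, sig Vp X j < sig Vp Y j := by
      by_contra h'
      push_neg at h'
      obtain ⟨i0, hi0⟩ := hs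
      have := Finset.sum_lt_sum (fun h _ => h' h)
        ⟨i0, Finset.mem_univ i0, lt_of_le_of_ne (h' i0) (Ne.symm hi0)⟩
      omega
    obtain ⟨i, hi⟩ := hexi
    obtain ⟨j, hj⟩ := hexj
    have hij : i ≠ j := by rintro rfl; omega
    have hsubi : ¬ (Vp i ∩ X ⊆ Vp i ∩ Y) := fun hsub => by
      have := Finset.card_le_card hsub
      simp only [sig] at hi
      omega
    have hsubj : ¬ (Vp j ∩ Y ⊆ Vp j ∩ X) := fun hsub => by
      have := Finset.card_le_card hsub
      simp only [sig] at hj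
      omega
    obtain ⟨u, huM, huN⟩ := Finset.not_subset.1 hsubi
    obtain ⟨v, hvM, hvN⟩ := Finset.not_subset.1 hsubj
    rw [Finset.mem_inter] at huM hvM
    have huY : u ∉ Y := fun hc => huN (Finset.mem_inter.2 ⟨huM.1, hc⟩)
    have hvX : v ∉ X := fun hc => hvN (Finset.mem_inter.2 ⟨hvM.1, hc⟩)
    have huX := huM.2
    have hvY := hvM.2
    have hui : u ∈ Vp i := huM.1
    have hvj : v ∈ Vp j := hvM.1
    have hvi : v ∉ Vp i := fun hc => hij (type_unique hVp hc hvj)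
    have huj : u ∉ Vp j := fun hc => hij (type_unique hVp hui hc)
    have hsigi : sig Vp X i = sig Vp (insert v (X.erase u)) i + 1 :=
      sig_swap_out huX hvX hui hvi
    have hsigj : sig Vp (insert v (X.erase u)) j = sig Vp X j + 1 :=
      sig_swap_in huX hvX huj hvj
    have htopi := top_of_ne (congrFun hshape i) (by omega)
    have htopj := top_of_ne (congrFun hshape j) (by omega)
    refine ⟨insert v (X.erase u), ?_, card_swap huX hvX, ?_, ?_, ?_⟩
    · funext h
      by_cases hhi : h = i
      · subst hhi
        unfold shapeOf
        rw [if_pos (by omega), if_pos (by omega)]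
      by_cases hhj : h = j
      · subst hhj
        unfold shapeOf
        rw [if_pos (by omega), if_pos (by omega)]
      · unfold shapeOf
        rw [sig_swap_other huX hvX (fun hc => hhi (type_unique hVp hc hui))
          (fun hc => hhj (type_unique hVp hc hvj))]
    · rw [sdiff_swap_target huX hvX hvY,
        Finset.card_erase_of_mem (Finset.mem_sdiff.2 ⟨huX, huY⟩)]
      have : 1 ≤ (X \ Y).card := Finset.card_pos.2 ⟨u, Finset.mem_sdiff.2 ⟨huX, huY⟩⟩
      omega
    · rw [sdiff_swap₁ huX hvX]; simp
    · rw [sdiff_swap₂ huX hvX]; simp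

lemma route (hVp : IsTypePartition Vp) :
    ∀ (d : ℕ) (X Y : Finset α), (X \ Y).card = d → X.card = Y.card →
      shapeOf q Vp X = shapeOf q Vp Y →
    ∃ r : ℕ → Finset α, r 0 = X ∧ r d = Y ∧
      (∀ n ≤ d, shapeOf q Vp (r n) = shapeOf q Vp X ∧ (r n).card = X.card) ∧
      ∀ n < d, (r n \ r (n + 1)).card = 1 ∧ (r (n + 1) \ r n).card = 1 := by
  intro d
  induction d with
  | zero =>
    intro X Y hd hcard hshape
    have hXY : X = Y := by
      apply Finset.eq_of_subset_of_card_le _ (le_of_eq hcard.symm)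
      intro x hx
      by_contra hc
      have : x ∈ X \ Y := Finset.mem_sdiff.2 ⟨hx, hc⟩
      have := Finset.card_pos.2 ⟨x, this⟩
      omega
    exact ⟨fun _ => X, rfl, hXY, fun n _ => ⟨rfl, rfl⟩, fun n hn => absurd hn (by omega)⟩
  | succ d ih =>
    intro X Y hd hcard hshape
    have hne : (X \ Y).Nonempty := Finset.card_pos.1 (by omega)
    obtain ⟨X', hsh', hcard', hdiff', hXX', hX'X⟩ := step_exists hVp hcard hshape hne
    obtain ⟨r', hr0, hrd, hrprop, hrstep⟩ :=
      ih X' Y (by omega) (hcard'.trans hcard) (hsh'.trans hshape)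
    refine ⟨fun n => Nat.casesOn n X r', rfl, hrd, ?_, ?_⟩
    · rintro (_ | n) hn
      · exact ⟨rfl, rfl⟩
      · have := hrprop n (by omega)
        exact ⟨this.1.trans hsh', this.2.trans hcard'⟩
    · rintro (_ | n) hn
      · simpa [hr0] using ⟨hXX', hX'X⟩
      · exact hrstep n (by omega)

/-- number of shape changes among the first `ℓ` steps of `seq`. -/
def cnt (q : ℕ) (Vp : Fin t → Finset α) (seq : ℕ → Finset α) (ℓ : ℕ) : ℕ :=
  ((Finset.range ℓ).filter
    fun n => shapeOf q Vp (seq n) ≠ shapeOf q Vp (seq (n + 1))).card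

lemma cnt_zero (seq : ℕ → Finset α) : cnt q Vp seq 0 = 0 := by simp [cnt]

lemma cnt_succ (seq : ℕ → Finset α) (ℓ : ℕ) :
    cnt q Vp seq (ℓ + 1) = cnt q Vp seq ℓ +
      (if shapeOf q Vp (seq ℓ) ≠ shapeOf q Vp (seq (ℓ + 1)) then 1 else 0) := by
  unfold cnt
  rw [Finset.range_add_one, Finset.filter_insert]
  split_ifs with h
  · rw [Finset.card_insert_of_notMem (by simp)]
  · rw [add_zero]

lemma cnt_mono (seq : ℕ → Finset α) {a b : ℕ} (h : a ≤ b) :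
    cnt q Vp seq a ≤ cnt q Vp seq b :=
  Finset.card_le_card (Finset.filter_subset_filter _ (Finset.range_subset_range.2 h))

lemma cnt_succ_of_eq {seq : ℕ → Finset α} {n : ℕ}
    (h : shapeOf q Vp (seq n) = shapeOf q Vp (seq (n + 1))) :
    cnt q Vp seq (n + 1) = cnt q Vp seq n := by
  rw [cnt_succ, if_neg (by simpa using h), add_zero]

lemma cnt_succ_of_ne {seq : ℕ → Finset α} {n : ℕ}
    (h : shapeOf q Vp (seq n) ≠ shapeOf q Vp (seq (n + 1))) :
    cnt q Vp seq (n + 1) = cnt q Vp seq n + 1 := by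
  rw [cnt_succ, if_pos h]

lemma cnt_le_succ (seq : ℕ → Finset α) (n : ℕ) :
    cnt q Vp seq (n + 1) ≤ cnt q Vp seq n + 1 := by
  rw [cnt_succ]; split_ifs <;> omega

lemma shape_eq_of_cnt {seq : ℕ → Finset α} {n : ℕ}
    (h : cnt q Vp seq (n + 1) = cnt q Vp seq n) :
    shapeOf q Vp (seq n) = shapeOf q Vp (seq (n + 1)) := by
  by_contra hc
  rw [cnt_succ_of_ne hc] at h
  omega

lemma cnt_add (seq : ℕ → Finset α) (a b : ℕ) :
    cnt q Vp seq (a + b) = cnt q Vp seq a + cnt q Vp (fun n => seq (a + n)) b := by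
  induction b with
  | zero => simp [cnt_zero]
  | succ b ih =>
    rw [Nat.add_succ, cnt_succ, ih, cnt_succ, Nat.add_assoc]
    rfl

lemma cnt_congr {seq seq' : ℕ → Finset α} {ℓ : ℕ}
    (h : ∀ i ≤ ℓ, seq i = seq' i) : cnt q Vp seq ℓ = cnt q Vp seq' ℓ := by
  unfold cnt
  apply Finset.card_bij (fun n _ => n)
  · intro n hn
    simp only [Finset.mem_filter, Finset.mem_range] at hn ⊢
    rw [← h n (by omega), ← h (n + 1) (by omega)]
    exact hn
  · intro n _ n' _ h; exact h
  · intro n hn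
    simp only [Finset.mem_filter, Finset.mem_range] at hn
    refine ⟨n, ?_, rfl⟩
    simp only [Finset.mem_filter, Finset.mem_range]
    rw [h n (by omega), h (n + 1) (by omega)]
    exact hn

lemma cnt_eq_zero {seq : ℕ → Finset α} {ℓ : ℕ} {σ : Fin t → Option ℕ}
    (h : ∀ i ≤ ℓ, shapeOf q Vp (seq i) = σ) : cnt q Vp seq ℓ = 0 := by
  unfold cnt
  rw [Finset.card_eq_zero, Finset.filter_eq_empty_iff]
  intro n hn
  rw [Finset.mem_range] at hn
  rw [h n (by omega), h (n + 1) (by omega)]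
  simp

lemma shape_const {seq : ℕ → Finset α} :
    ∀ (d i : ℕ), cnt q Vp seq (i + d) = cnt q Vp seq i →
      shapeOf q Vp (seq (i + d)) = shapeOf q Vp (seq i) := by
  intro d
  induction d with
  | zero => intro i _; rfl
  | succ d ih =>
    intro i h
    have hh : i + (d + 1) = i + d + 1 := rfl
    rw [hh] at h
    have h1 : cnt q Vp seq i ≤ cnt q Vp seq (i + d) := cnt_mono _ (by omega)
    have h2 : cnt q Vp seq (i + d) ≤ cnt q Vp seq (i + d + 1) := cnt_mono _ (by omega)
    have h3 : cnt q Vp seq (i + d + 1) = cnt q Vp seq (i + d) := by omega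
    rw [hh, ← shape_eq_of_cnt h3]
    exact ih i (by omega)

lemma shape_const' {seq : ℕ → Finset α} {i i' : ℕ} (hii : i ≤ i')
    (h : cnt q Vp seq i' = cnt q Vp seq i) :
    shapeOf q Vp (seq i') = shapeOf q Vp (seq i) := by
  obtain ⟨d, rfl⟩ := Nat.exists_eq_add_of_le hii
  exact shape_const d i h

lemma hits (f : ℕ → ℕ) (h0 : f 0 = 0) (hstep : ∀ i, f (i + 1) ≤ f i + 1) :
    ∀ ℓ j, j ≤ f ℓ → ∃ i, i ≤ ℓ ∧ f i = j := by
  intro ℓ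
  induction ℓ with
  | zero => intro j hj; exact ⟨0, le_refl _, by omega⟩
  | succ ℓ ih =>
    intro j hj
    by_cases h : j ≤ f ℓ
    · obtain ⟨i, hi, hfi⟩ := ih j h
      exact ⟨i, by omega, hfi⟩
    · exact ⟨ℓ + 1, le_refl _, by have := hstep ℓ; omega⟩

lemma card_step {A B : Finset α} (h1 : (A \ B).card = 1) (h2 : (B \ A).card = 1) :
    B.card = A.card := by
  have hA := Finset.card_inter_add_card_sdiff A B
  have hB := Finset.card_inter_add_card_sdiff B A
  rw [Finset.inter_comm] at hB
  omega

lemma sdiff_card_eq {A B : Finset α} (h : A.card = B.card) :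
    (B \ A).card = (A \ B).card := by
  have hA := Finset.card_inter_add_card_sdiff A B
  have hB := Finset.card_inter_add_card_sdiff B A
  rw [Finset.inter_comm] at hB
  omega

lemma dist_step {A B C : Finset α} (h : (A \ B).card = 1) :
    (A \ C).card ≤ (B \ C).card + 1 := by
  have hsub : A \ C ⊆ (B \ C) ∪ (A \ B) := by
    intro x hx
    rw [Finset.mem_sdiff] at hx
    rw [Finset.mem_union, Finset.mem_sdiff, Finset.mem_sdiff]
    by_cases hxB : x ∈ B
    · exact Or.inl ⟨hxB, hx.2⟩
    · exact Or.inr ⟨hx.1, hxB⟩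
  calc (A \ C).card ≤ ((B \ C) ∪ (A \ B)).card := Finset.card_le_card hsub
    _ ≤ (B \ C).card + (A \ B).card := Finset.card_union_le _ _
    _ = (B \ C).card + 1 := by rw [h]

lemma seq_dist {seq : ℕ → Finset α} {ℓ : ℕ}
    (hstep : ∀ i < ℓ, (seq i \ seq (i + 1)).card = 1 ∧ (seq (i + 1) \ seq i).card = 1) :
    ∀ (n p : ℕ), p + n ≤ ℓ → (seq p \ seq (p + n)).card ≤ n := by
  intro n
  induction n with
  | zero => intro p _; simp
  | succ n ih =>
    intro p hp
    have h1 := (hstep p (by omega)).1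
    have h2 := ih (p + 1) (by omega)
    calc (seq p \ seq (p + (n + 1))).card
        ≤ (seq (p + 1) \ seq (p + (n + 1))).card + 1 := dist_step h1
      _ ≤ n + 1 := by
          have : p + 1 + n = p + (n + 1) := by omega
          rw [← this]; omega

lemma seq_card_const {seq : ℕ → Finset α} {ℓ : ℕ}
    (hstep : ∀ i < ℓ, (seq i \ seq (i + 1)).card = 1 ∧ (seq (i + 1) \ seq i).card = 1) :
    ∀ i ≤ ℓ, (seq i).card = (seq 0).card := by
  intro i
  induction i with
  | zero => intro _; rfl
  | succ i ih =>
    intro hi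
    rw [card_step (hstep i (by omega)).1 (hstep i (by omega)).2]
    exact ih (by omega)

lemma adj_helper (hq : 1 ≤ q) {A B : Finset α} {i : Fin t}
    (hstep : sig Vp A i = sig Vp B i + 1) :
    (shapeOf q Vp A i = shapeOf q Vp B i) ∨
    (Acond q Vp (shapeOf q Vp A) (shapeOf q Vp B) i ∧
      (shapeOf q Vp A i = none → sig Vp A i = q) ∧
      (shapeOf q Vp B i = none → sig Vp B i = (Vp i).card - q)) := by
  by_cases h1 : q ≤ sig Vp A i ∧ sig Vp A i ≤ (Vp i).card - q <;>
    by_cases h2 : q ≤ sig Vp B i ∧ sig Vp B i ≤ (Vp i).card - q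
  · left
    unfold shapeOf
    rw [if_pos h1, if_pos h2]
  · right
    have hsA : sig Vp A i = q := by omega
    have hsB : sig Vp B i = q - 1 := by omega
    have hσ1 : shapeOf q Vp A i = none := by unfold shapeOf; rw [if_pos h1]
    have hσ2 : shapeOf q Vp B i = some (q - 1) := by
      unfold shapeOf; rw [if_neg h2, hsB]
    refine ⟨Or.inr (Or.inl ⟨hσ1, hσ2⟩), fun _ => hsA, fun hc => ?_⟩
    rw [hσ2] at hc; cases hc
  · right
    have hsA : sig Vp A i = (Vp i).card - q + 1 := by omega
    have hsB : sig Vp B i = (Vp i).card - q := by omega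
    have hσ1 : shapeOf q Vp A i = some ((Vp i).card - q + 1) := by
      unfold shapeOf; rw [if_neg h1, hsA]
    have hσ2 : shapeOf q Vp B i = none := by unfold shapeOf; rw [if_pos h2]
    refine ⟨Or.inr (Or.inr ⟨hσ1, hσ2⟩), fun hc => ?_, fun _ => hsB⟩
    rw [hσ1] at hc; cases hc
  · right
    have hσ1 : shapeOf q Vp A i = some (sig Vp A i) := by unfold shapeOf; rw [if_neg h1]
    have hσ2 : shapeOf q Vp B i = some (sig Vp B i) := by unfold shapeOf; rw [if_neg h2]
    refine ⟨Or.inl ⟨sig Vp A i, sig Vp B i, hσ1, hσ2, by omega⟩, fun hc => ?_, fun hc => ?_⟩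
    · rw [hσ1] at hc; cases hc
    · rw [hσ2] at hc; cases hc

lemma bcond_iff {σ1 σ2 : Fin t → Option ℕ} {j : Fin t} :
    Bcond q Vp σ1 σ2 j ↔ Acond q Vp σ2 σ1 j := by
  unfold Acond Bcond
  constructor
  · rintro (⟨a, b, ha, hb, hab⟩ | h | h)
    · exact Or.inl ⟨b, a, hb, ha, hab⟩
    · exact Or.inr (Or.inl h)
    · exact Or.inr (Or.inr h)
  · rintro (⟨a, b, ha, hb, hab⟩ | h | h)
    · exact Or.inl ⟨b, a, hb, ha, hab⟩
    · exact Or.inr (Or.inl h)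
    · exact Or.inr (Or.inr h)

lemma acond_ne {σ1 σ2 : Fin t → Option ℕ} {i : Fin t}
    (h : Acond q Vp σ1 σ2 i) : σ1 i ≠ σ2 i := by
  rcases h with ⟨a, b, ha, hb, hab⟩ | ⟨ha, hb⟩ | ⟨ha, hb⟩ <;> rw [ha, hb] <;> simp
  omega

lemma step_adj (hq : 1 ≤ q) (hVp : IsTypePartition Vp) {A B : Finset α}
    (h1 : (A \ B).card = 1) (h2 : (B \ A).card = 1)
    (hne : shapeOf q Vp A ≠ shapeOf q Vp B) :
    ShapeAdj q Vp A.card (shapeOf q Vp A) (shapeOf q Vp B) := by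
  classical
  obtain ⟨u, hu⟩ := Finset.card_eq_one.1 h1
  obtain ⟨v, hv⟩ := Finset.card_eq_one.1 h2
  have huAB : u ∈ A \ B := by rw [hu]; exact Finset.mem_singleton_self u
  have hvBA : v ∈ B \ A := by rw [hv]; exact Finset.mem_singleton_self v
  rw [Finset.mem_sdiff] at huAB hvBA
  obtain ⟨huA, huB⟩ := huAB
  obtain ⟨hvB, hvA⟩ := hvBA
  have hB : B = insert v (A.erase u) := by
    ext x
    rw [mem_swap huA hvA]
    constructor
    · intro hx
      by_cases hxA : x ∈ A
      · refine Or.inr ⟨hxA, ?_⟩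
        rintro rfl; exact huB hx
      · have : x ∈ B \ A := Finset.mem_sdiff.2 ⟨hx, hxA⟩
        rw [hv, Finset.mem_singleton] at this
        exact Or.inl this
    · rintro (rfl | ⟨hxA, hxu⟩)
      · exact hvB
      · by_contra hxB
        have : x ∈ A \ B := Finset.mem_sdiff.2 ⟨hxA, hxB⟩
        rw [hu, Finset.mem_singleton] at this
        exact hxu this
  obtain ⟨iu, hui⟩ := hVp.2.2 u
  obtain ⟨iv, hvi⟩ := hVp.2.2 v
  by_cases hiuv : iu = iv
  · -- same type: shapes equal, contradiction
    subst hiuv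
    exfalso
    apply hne
    apply (shape_congr (X := A) (X' := B) ?_).symm
    intro h
    rw [hB]
    by_cases hh : h = iu
    · subst hh; exact sig_swap_same huA hvA hui hvi
    · exact sig_swap_other huA hvA (fun hc => hh (type_unique hVp hc hui))
        (fun hc => hh (type_unique hVp hc hvi))
  have hviu : v ∉ Vp iu := fun hc => hiuv (type_unique hVp hc hvi)
  have huiv : u ∉ Vp iv := fun hc => hiuv (type_unique hVp hui hc)
  have hsig_u : sig Vp A iu = sig Vp B iu + 1 := by
    rw [hB]; exact sig_swap_out huA hvA hui hviu
  have hsig_v : sig Vp B iv = sig Vp A iv + 1 := by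
    rw [hB]; exact sig_swap_in huA hvA huiv hvi
  have hshape_other : ∀ h, h ≠ iu → h ≠ iv → shapeOf q Vp A h = shapeOf q Vp B h := by
    intro h hhu hhv
    have : sig Vp B h = sig Vp A h := by
      rw [hB]
      exact sig_swap_other huA hvA (fun hc => hhu (type_unique hVp hc hui))
        (fun hc => hhv (type_unique hVp hc hvi))
    unfold shapeOf
    rw [this]
  have hBcard : B.card = A.card := card_step h1 h2
  have hA' := adj_helper hq (A := A) (B := B) (i := iu) hsig_u
  have hB' := adj_helper hq (A := B) (B := A) (i := iv) hsig_v
  rcases hA' with hAeq | ⟨hAc, hAx1, hAx2⟩ <;> rcases hB' with hBeq | ⟨hBc, hBx1, hBx2⟩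
  · -- shapes agree at both: contradiction
    exfalso
    apply hne
    funext h
    by_cases hhu : h = iu
    · subst hhu; exact hAeq
    by_cases hhv : h = iv
    · subst hhv; exact hBeq.symm
    · exact hshape_other h hhu hhv
  · -- only j = iv disagrees
    refine Or.inr (Or.inr ⟨iv, ?_, bcond_iff.2 hBc, ?_, ?_⟩)
    · intro h
      constructor
      · intro hne'
        by_contra hc
        by_cases hhu : h = iu
        · subst hhu; exact hne' hAeq
        · exact hne' (hshape_other h hhu hc)
      · rintro rfl
        exact (acond_ne hBc).symm
    · refine ⟨A, rfl, rfl, ?_, ?_⟩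
      · intro i0 hi0; cases hi0
      · intro j0 hj0
        cases Option.some.inj hj0
        exact hBx2
    · refine ⟨B, hBcard, rfl, ?_, ?_⟩
      · intro i0 hi0; cases hi0
      · intro j0 hj0
        cases Option.some.inj hj0
        exact hBx1
  · -- only i = iu disagrees
    refine Or.inr (Or.inl ⟨iu, ?_, hAc, ?_, ?_⟩)
    · intro h
      constructor
      · intro hne'
        by_contra hc
        by_cases hhv : h = iv
        · subst hhv; exact hne' hBeq.symm
        · exact hne' (hshape_other h hc hhv)
      · rintro rfl
        exact acond_ne hAc
    · refine ⟨A, rfl, rfl, ?_, ?_⟩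
      · intro i0 hi0
        cases Option.some.inj hi0
        exact hAx1
      · intro j0 hj0; cases hj0
    · refine ⟨B, hBcard, rfl, ?_, ?_⟩
      · intro i0 hi0
        cases Option.some.inj hi0
        exact hAx2
      · intro j0 hj0; cases hj0
  · -- both disagree
    refine Or.inl ⟨iu, iv, hiuv, ?_, hAc, bcond_iff.2 hBc, ?_, ?_⟩
    · intro h
      constructor
      · intro hne'
        by_contra hc
        push_neg at hc
        exact hne' (hshape_other h hc.1 hc.2)
      · rintro (rfl | rfl)
        · exact acond_ne hAc
        · exact (acond_ne hBc).symm
    · refine ⟨A, rfl, rfl, ?_, ?_⟩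
      · intro i0 hi0
        cases Option.some.inj hi0
        exact hAx1
      · intro j0 hj0
        cases Option.some.inj hj0
        exact hBx2
    · refine ⟨B, hBcard, rfl, ?_, ?_⟩
      · intro i0 hi0
        cases Option.some.inj hi0
        exact hAx2
      · intro j0 hj0
        cases Option.some.inj hj0
        exact hBx1

end Aux

/-- If some TJ(P)-sequence from `S` to `S'` exists, then there is one
of minimum length whose shape sequence consists of pairwise distinct shapes with
consecutive ones adjacent in the size-`k` shape graph (a simple path in `S_k`). -/
theorem stmt3 {t q : ℕ} (hq : 1 ≤ q) (Vp : Fin t → Finset α)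
    (hVp : IsTypePartition Vp) (P : Finset α → Prop) (hP : ShapeInvariant q Vp P)
    (k : ℕ) (S S' : Finset α) (hS : P S) (hS' : P S')
    (hkS : S.card = k) (hkS' : S'.card = k)
    (hex : ∃ (seq : ℕ → Finset α) (ℓ : ℕ), TJSeq P seq ℓ S S') :
    ∃ (seq : ℕ → Finset α) (ℓ : ℕ), TJSeq P seq ℓ S S' ∧
      (∀ (seq' : ℕ → Finset α) (ℓ' : ℕ), TJSeq P seq' ℓ' S S' → ℓ ≤ ℓ') ∧
      ∃ (σs : ℕ → Fin t → Option ℕ) (m : ℕ), ShapeSeqOf q Vp seq ℓ σs m ∧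
        (∀ j j', j ≤ m → j' ≤ m → j ≠ j' → σs j ≠ σs j') ∧
        (∀ j < m, GraphAdj q Vp P k (σs j) (σs (j + 1))) := by
  classical
  -- choose a TJ-sequence of minimum length
  have h1 : ∃ ℓ, ∃ seq : ℕ → Finset α, TJSeq P seq ℓ S S' := by
    obtain ⟨s, l, h⟩ := hex; exact ⟨l, s, h⟩
  set ℓ0 := Nat.find h1 with hℓ0def
  have hseqEx : ∃ seq, TJSeq P seq ℓ0 S S' := Nat.find_spec h1
  have hℓmin : ∀ (seq' : ℕ → Finset α) (ℓ' : ℕ), TJSeq P seq' ℓ' S S' → ℓ0 ≤ ℓ' :=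
    fun seq' ℓ' h => Nat.find_min' h1 ⟨seq', h⟩
  -- among those, choose one with the minimum number of shape changes
  have h2 : ∃ m, ∃ seq, TJSeq P seq ℓ0 S S' ∧ cnt q Vp seq ℓ0 = m := by
    obtain ⟨s, h⟩ := hseqEx; exact ⟨_, s, h, rfl⟩
  set m0 := Nat.find h2 with hm0def
  obtain ⟨seq, hTJ, hcnt⟩ := Nat.find_spec h2
  have hmmin : ∀ seq', TJSeq P seq' ℓ0 S S' → m0 ≤ cnt q Vp seq' ℓ0 :=
    fun seq' h => Nat.find_min' h2 ⟨seq', h, rfl⟩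
  obtain ⟨hS0, hSl, hPseq, hstep⟩ := hTJ
  have hcard : ∀ i ≤ ℓ0, (seq i).card = k := by
    intro i hi
    rw [seq_card_const hstep i hi, hS0, hkS]
  have hex_idx : ∀ j, j ≤ m0 → ∃ i, i ≤ ℓ0 ∧ cnt q Vp seq i = j := by
    intro j hj
    exact hits (cnt q Vp seq) (cnt_zero _) (cnt_le_succ _) ℓ0 j (by rw [hcnt]; exact hj)
  set σs : ℕ → Fin t → Option ℕ := fun j =>
    if h : ∃ i, i ≤ ℓ0 ∧ cnt q Vp seq i = j then shapeOf q Vp (seq (Nat.find h))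
    else fun _ => none with hσsdef
  -- within a block the shape is the block shape
  have key_shape : ∀ i, i ≤ ℓ0 → shapeOf q Vp (seq i) = σs (cnt q Vp seq i) := by
    intro i hi
    have hx : ∃ i', i' ≤ ℓ0 ∧ cnt q Vp seq i' = cnt q Vp seq i := ⟨i, hi, rfl⟩
    rw [hσsdef]
    simp only []
    rw [dif_pos hx]
    have hfind := Nat.find_spec hx
    have hle : Nat.find hx ≤ i := Nat.find_min' hx ⟨hi, rfl⟩
    exact shape_const' hle hfind.2.symm
  -- the first index of each block, with its properties
  have hfst : ∀ j (hj : j ≤ m0),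
      Nat.find (hex_idx j hj) ≤ ℓ0 ∧ cnt q Vp seq (Nat.find (hex_idx j hj)) = j ∧
      σs j = shapeOf q Vp (seq (Nat.find (hex_idx j hj))) := by
    intro j hj
    obtain ⟨ha, hb⟩ := Nat.find_spec (hex_idx j hj)
    refine ⟨ha, hb, ?_⟩
    have hks := key_shape _ ha
    rw [hb] at hks
    exact hks.symm
  have hfst_min : ∀ j (hj : j ≤ m0), ∀ i, i ≤ ℓ0 → cnt q Vp seq i = j →
      Nat.find (hex_idx j hj) ≤ i :=
    fun j hj i hi hci => Nat.find_min' (hex_idx j hj) ⟨hi, hci⟩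
  -- properties of the step just before a new block
  have hprev : ∀ j (hj1 : 1 ≤ j) (hj : j ≤ m0),
      1 ≤ Nat.find (hex_idx j hj) ∧
      cnt q Vp seq (Nat.find (hex_idx j hj) - 1) = j - 1 ∧
      shapeOf q Vp (seq (Nat.find (hex_idx j hj) - 1)) ≠
        shapeOf q Vp (seq (Nat.find (hex_idx j hj))) := by
    intro j hj1 hj
    obtain ⟨hle, hcfst, -⟩ := hfst j hj
    set i1 := Nat.find (hex_idx j hj) with hi1
    have hpos : 1 ≤ i1 := by
      by_contra hc
      have : i1 = 0 := by omega
      rw [this, cnt_zero] at hcfst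
      omega
    have hne : cnt q Vp seq (i1 - 1) ≠ j := by
      intro hc
      have := hfst_min j hj (i1 - 1) (by omega) hc
      omega
    have hle2 : cnt q Vp seq (i1 - 1) ≤ j := by
      rw [← hcfst]; exact cnt_mono _ (by omega)
    have hsucc : i1 - 1 + 1 = i1 := by omega
    have hle3 : cnt q Vp seq i1 ≤ cnt q Vp seq (i1 - 1) + 1 := by
      conv_lhs => rw [← hsucc]
      exact cnt_le_succ _ _
    have hcprev : cnt q Vp seq (i1 - 1) = j - 1 := by omega
    refine ⟨hpos, hcprev, ?_⟩
    intro hc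
    have := cnt_succ_of_eq (n := i1 - 1) (by rw [hsucc]; exact hc)
    rw [hsucc] at this
    omega
  -- pairwise distinctness of the block shapes, via splicing a shape-constant route
  have hdistinct : ∀ j j', j < j' → j' ≤ m0 → σs j ≠ σs j' := by
    intro j j' hjj' hj'le heq
    have hj1 : j + 1 ≤ m0 := by omega
    obtain ⟨hp'le, hcp', hσp'⟩ := hfst j' hj'le
    set p' := Nat.find (hex_idx j' hj'le) with hp'def
    obtain ⟨hi1pos, hcprev, -⟩ := hprev (j + 1) (by omega) hj1
    obtain ⟨hi1le, hci1, -⟩ := hfst (j + 1) hj1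
    set i1 := Nat.find (hex_idx (j + 1) hj1) with hi1def
    set p := i1 - 1 with hpdef
    have hple : p ≤ ℓ0 := by omega
    have hcp : cnt q Vp seq p = j := by omega
    have hi1p' : i1 ≤ p' := by
      obtain ⟨i, hi, hci⟩ := hits (cnt q Vp seq) (cnt_zero _) (cnt_le_succ _) p' (j + 1)
        (by rw [hcp']; omega)
      exact le_trans (hfst_min (j + 1) hj1 i (by omega) hci) hi
    have hpp' : p < p' := by omega
    have hshX : shapeOf q Vp (seq p) = σs j := by rw [key_shape p hple, hcp]
    have hshY : shapeOf q Vp (seq p') = σs j := by rw [key_shape p' hp'le, hcp', ← heq]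
    have hcardXY : (seq p).card = (seq p').card := by
      rw [hcard p hple, hcard p' hp'le]
    obtain ⟨r, hr0, hrd, hrprop, hrstep⟩ := route hVp ((seq p \ seq p').card)
      (seq p) (seq p') rfl hcardXY (hshX.trans hshY.symm)
    set d := (seq p \ seq p').card with hddef
    have hdle : d ≤ p' - p := by
      have h := seq_dist hstep (p' - p) p (by omega)
      have hpp : p + (p' - p) = p' := by omega
      rw [hpp] at h
      exact h
    set newseq : ℕ → Finset α := fun n =>
      if n < p then seq n else if n < p + d then r (n - p)
      else seq (n - (p + d) + p') with hnewdef
    have hXY0 : d = 0 → seq p = seq p' := by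
      intro h0
      refine Finset.eq_of_subset_of_card_le ?_ (le_of_eq hcardXY.symm)
      intro x hx
      by_contra hc
      have hmem : x ∈ seq p \ seq p' := Finset.mem_sdiff.2 ⟨hx, hc⟩
      have := Finset.card_pos.2 ⟨x, hmem⟩
      omega
    have hV1 : ∀ n, n ≤ p → newseq n = seq n := by
      intro n hn
      rw [hnewdef]
      simp only []
      by_cases h : n < p
      · rw [if_pos h]
      · have hnp : n = p := by omega
        subst hnp
        rw [if_neg h]
        by_cases hd : 0 < d
        · rw [if_pos (by omega), Nat.sub_self, hr0]
        · have hd0 : d = 0 := by omega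
          rw [if_neg (by omega)]
          have e1 : p - (p + d) + p' = p' := by omega
          rw [e1, ← hXY0 hd0]
    have hV2 : ∀ n, p ≤ n → n ≤ p + d → newseq n = r (n - p) := by
      intro n h1n h2n
      rw [hnewdef]
      simp only []
      by_cases h : n < p + d
      · rw [if_neg (by omega), if_pos h]
      · have hn : n = p + d := by omega
        rw [if_neg (by omega), if_neg (by omega)]
        have e1 : n - (p + d) + p' = p' := by omega
        have e2 : n - p = d := by omega
        rw [e1, e2, hrd]
    have hV3 : ∀ n, p + d ≤ n → newseq n = seq (n - (p + d) + p') := by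
      intro n hn
      by_cases h : n = p + d
      · rw [hV2 n (by omega) (by omega)]
        have e2 : n - p = d := by omega
        have e1 : n - (p + d) + p' = p' := by omega
        rw [e1, e2, hrd]
      · rw [hnewdef]
        simp only []
        rw [if_neg (by omega), if_neg (by omega)]
    set e := ℓ0 - p' with hedef
    set ℓ' := p + d + e with hℓ'def
    have hTJ' : TJSeq P newseq ℓ' S S' := by
      refine ⟨?_, ?_, ?_, ?_⟩
      · rw [hV1 0 (by omega), hS0]
      · rw [hV3 ℓ' (by omega)]
        have e1 : ℓ' - (p + d) + p' = ℓ0 := by omega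
        rw [e1, hSl]
      · intro n hn
        by_cases h1n : n ≤ p
        · rw [hV1 n h1n]
          exact hPseq n (by omega)
        by_cases h2n : n ≤ p + d
        · rw [hV2 n (by omega) h2n]
          exact (hP _ _ ((hrprop (n - p) (by omega)).1)).2 (hPseq p hple)
        · rw [hV3 n (by omega)]
          exact hPseq _ (by omega)
      · intro n hn
        by_cases h1n : n + 1 ≤ p
        · rw [hV1 n (by omega), hV1 (n + 1) h1n]
          exact hstep n (by omega)
        by_cases h2n : n + 1 ≤ p + d
        · rw [hV2 n (by omega) (by omega), hV2 (n + 1) (by omega) h2n]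
          have e1 : n + 1 - p = n - p + 1 := by omega
          rw [e1]
          exact hrstep (n - p) (by omega)
        · rw [hV3 n (by omega), hV3 (n + 1) (by omega)]
          have e1 : n + 1 - (p + d) + p' = n - (p + d) + p' + 1 := by omega
          rw [e1]
          exact hstep _ (by omega)
    have hℓ'ge : ℓ0 ≤ ℓ' := hℓmin newseq ℓ' hTJ'
    have hℓ'eq : ℓ' = ℓ0 := by omega
    rw [hℓ'eq] at hTJ'
    have hmle : m0 ≤ cnt q Vp newseq ℓ0 := hmmin newseq hTJ'
    -- compute the number of shape changes of the spliced sequence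
    have hc1 : cnt q Vp newseq p = j := by
      rw [cnt_congr (fun i hi => hV1 i hi)]
      exact hcp
    have hc2 : cnt q Vp (fun n => newseq (p + n)) d = 0 := by
      apply cnt_eq_zero (σ := σs j)
      intro i hi
      rw [hV2 (p + i) (by omega) (by omega)]
      have e1 : p + i - p = i := by omega
      rw [e1, (hrprop i hi).1, hshX]
    have hc3 : cnt q Vp (fun n => newseq (p + (d + n))) e
        = cnt q Vp (fun n => seq (p' + n)) e := by
      apply cnt_congr
      intro i hi
      rw [hV3 (p + (d + i)) (by omega)]
      congr 1
      omega
    have hc4 : m0 = j' + cnt q Vp (fun n => seq (p' + n)) e := by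
      have h := cnt_add (q := q) (Vp := Vp) seq p' e
      have hpe : p' + e = ℓ0 := by omega
      rw [hpe, hcnt, hcp'] at h
      exact h
    have hc5 : cnt q Vp newseq ℓ0 = j + cnt q Vp (fun n => seq (p' + n)) e := by
      have h := cnt_add (q := q) (Vp := Vp) newseq p (d + e)
      have h' := cnt_add (q := q) (Vp := Vp) (fun n => newseq (p + n)) d e
      have hℓ'2 : ℓ0 = p + (d + e) := by omega
      rw [hℓ'2, h, h', hc1, hc2]
      rw [hc3]
      omega
    omega
  -- assemble the answer
  refine ⟨seq, ℓ0, ⟨hS0, hSl, hPseq, hstep⟩, hℓmin, σs, m0, ?_, ?_, ?_⟩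
  · -- the shape sequence
    refine ⟨fun i => cnt q Vp seq (min i ℓ0), ?_, ?_, ?_, ?_, ?_⟩
    · show cnt q Vp seq (min 0 ℓ0) = 0
      have e1 : min 0 ℓ0 = 0 := by omega
      rw [e1, cnt_zero]
    · show cnt q Vp seq (min ℓ0 ℓ0) = m0
      rw [min_self]
      exact hcnt
    · intro i hi
      show cnt q Vp seq (min (i + 1) ℓ0) = cnt q Vp seq (min i ℓ0) ∨
        cnt q Vp seq (min (i + 1) ℓ0) = cnt q Vp seq (min i ℓ0) + 1
      have e1 : min i ℓ0 = i := by omega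
      have e2 : min (i + 1) ℓ0 = i + 1 := by omega
      rw [e1, e2]
      have h1 := cnt_le_succ (q := q) (Vp := Vp) seq i
      have h2 := cnt_mono (q := q) (Vp := Vp) seq (show i ≤ i + 1 by omega)
      omega
    · intro i hi
      show shapeOf q Vp (seq i) = σs (cnt q Vp seq (min i ℓ0))
      have e1 : min i ℓ0 = i := by omega
      rw [e1]
      exact key_shape i hi
    · intro jj hjj
      exact hdistinct jj (jj + 1) (by omega) (by omega)
  · -- pairwise distinct shapes
    intro j j' hjm hj'm hne
    rcases lt_trichotomy j j' with h | h | h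
    · exact hdistinct j j' h hj'm
    · exact absurd h hne
    · exact (hdistinct j' j h hjm).symm
  · -- consecutive shapes are adjacent in the shape graph
    intro jj hjj
    have hj1 : jj + 1 ≤ m0 := by omega
    obtain ⟨hpos, hcprev, hshne⟩ := hprev (jj + 1) (by omega) hj1
    obtain ⟨hle, hcfst, hσ2⟩ := hfst (jj + 1) hj1
    set i1 := Nat.find (hex_idx (jj + 1) hj1) with hi1def
    have hple : i1 - 1 ≤ ℓ0 := by omega
    have hσ1 : σs jj = shapeOf q Vp (seq (i1 - 1)) := by
      have e1 : jj + 1 - 1 = jj := by omega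
      rw [key_shape _ hple, hcprev, e1]
    have hsuc : i1 - 1 + 1 = i1 := by omega
    have hstep1 := hstep (i1 - 1) (by omega)
    rw [hsuc] at hstep1
    refine ⟨?_, ⟨seq (i1 - 1), hcard _ hple, hσ1.symm, hPseq _ hple⟩,
      ⟨seq i1, hcard _ hle, hσ2.symm, hPseq _ hle⟩, ?_⟩
    · rw [hσ1, hσ2]
      exact hshne
    · have h := step_adj hq hVp hstep1.1 hstep1.2 hshne
      rw [hcard _ hple] at h
      rw [hσ1, hσ2]
      exact h
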